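/- Every support set S (for points in ℝ × ℝ^d) has at least 1 and at most d + 1 elements: 1 ≤ |S| ≤ d + 1. -/

import Mathlib

/-- `x` is feasible for `Inf_Q(T)`. -/
def QFeasible {d : ℕ} (T : Finset (ℝ × EuclideanSpace ℝ (Fin d)))
    (x : ℝ × EuclideanSpace ℝ (Fin d)) : Prop :=
  ∀ q ∈ T, ‖q.2 - x.2‖ ≤ q.1 - x.1

/-- `x` is optimal for `Inf_Q(T)`. -/
def QOptimal {d : ℕ} (T : Finset (ℝ × EuclideanSpace ℝ (Fin d)))
    (x : ℝ × EuclideanSpace ℝ (Fin d)) : Prop :=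
  QFeasible T x ∧ ∀ y, QFeasible T y → y.1 ≤ x.1

/-- `S` is a support set: it is nonempty and no nonempty proper subset has the same
optimal value for the corresponding `Inf_Q` problem. -/
def SupportSet {d : ℕ} (S : Finset (ℝ × EuclideanSpace ℝ (Fin d))) : Prop :=
  S.Nonempty ∧ ∀ S' ⊂ S, S'.Nonempty →
    ∀ x x', QOptimal S x → QOptimal S' x' → x'.1 ≠ x.1

set_option maxHeartbeats 1000000

open Finset RealInnerProductSpace

noncomputable section SupportSetAux

private lemma exists_qOptimal {d : ℕ} (S : Finset (ℝ × EuclideanSpace ℝ (Fin d)))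
    (hne : S.Nonempty) : ∃ x, QOptimal S x := by
  obtain ⟨p0, hp0⟩ := hne
  have hne : S.Nonempty := ⟨p0, hp0⟩
  set t0 := S.inf' hne (fun q => q.1 - ‖q.2 - p0.2‖) with ht0
  have hx0 : QFeasible S (t0, p0.2) := by
    intro q hq
    have h := Finset.inf'_le (fun q => q.1 - ‖q.2 - p0.2‖) hq
    show ‖q.2 - p0.2‖ ≤ q.1 - t0
    rw [ht0]
    linarith
  set K := {x : ℝ × EuclideanSpace ℝ (Fin d) | QFeasible S x ∧ t0 ≤ x.1} with hK
  have hKc : IsClosed K := by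
    have h1 : {x : ℝ × EuclideanSpace ℝ (Fin d) | QFeasible S x}
        = ⋂ q ∈ (S : Set (ℝ × EuclideanSpace ℝ (Fin d))),
          {x | ‖q.2 - x.2‖ ≤ q.1 - x.1} := by
      ext x; simp [QFeasible]
    have h1c : IsClosed {x : ℝ × EuclideanSpace ℝ (Fin d) | QFeasible S x} := by
      rw [h1]
      exact isClosed_biInter fun q _ =>
        isClosed_le ((continuous_const.sub continuous_snd).norm)
          (continuous_const.sub continuous_fst)
    exact h1c.inter (isClosed_le continuous_const continuous_fst)
  have hKb : Bornology.IsBounded K := by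
    refine (Metric.isBounded_closedBall (x := ((t0, p0.2) : ℝ × EuclideanSpace ℝ (Fin d)))
      (r := p0.1 - t0)).subset ?_
    intro x hx
    obtain ⟨hxf, hxt⟩ := hx
    have h1 : ‖p0.2 - x.2‖ ≤ p0.1 - x.1 := hxf p0 hp0
    have hx1 : x.1 ≤ p0.1 := by nlinarith [norm_nonneg (p0.2 - x.2)]
    simp only [Metric.mem_closedBall, Prod.dist_eq]
    refine max_le ?_ ?_
    · rw [Real.dist_eq]; rw [abs_le]; constructor <;> nlinarith
    · rw [dist_eq_norm, ← norm_neg]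
      simp only [neg_sub]
      nlinarith
  have hKcomp : IsCompact K := Metric.isCompact_of_isClosed_isBounded hKc hKb
  have hx0K : ((t0, p0.2) : ℝ × EuclideanSpace ℝ (Fin d)) ∈ K := ⟨hx0, le_refl _⟩
  obtain ⟨x, hxK, hmax⟩ := hKcomp.exists_isMaxOn ⟨_, hx0K⟩
    (continuous_fst.continuousOn)
  refine ⟨x, hxK.1, fun y hy => ?_⟩
  by_cases hc : t0 ≤ y.1
  · exact hmax ⟨hy, hc⟩
  · exact le_trans (le_of_lt (not_le.mp hc)) (hmax hx0K)


private lemma card_le_of_supportSet {d : ℕ} (hd : 1 ≤ d) (S : Finset (ℝ × EuclideanSpace ℝ (Fin d)))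
    (h : SupportSet S) : 1 ≤ S.card ∧ S.card ≤ d + 1 := by
  classical
  refine ⟨Finset.card_pos.mpr h.1, ?_⟩
  by_contra hcard
  push_neg at hcard
  -- hcard : d + 1 < S.card
  obtain ⟨x, hxopt⟩ := exists_qOptimal S h.1
  set v := x.1 with hv
  set c := x.2 with hc
  have hfeas : ∀ p ∈ S, ‖p.2 - c‖ ≤ p.1 - v := hxopt.1
  -- the active set
  set A := S.filter (fun p => p.1 - v = ‖p.2 - c‖) with hA
  have hAS : A ⊆ S := Finset.filter_subset _ _
  have hAmem : ∀ p ∈ A, p ∈ S ∧ p.1 - v = ‖p.2 - c‖ := by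
    intro p hp; exact Finset.mem_filter.mp hp
  -- the active set is nonempty
  have hAne : A.Nonempty := by
    by_contra hAe
    rw [Finset.not_nonempty_iff_eq_empty] at hAe
    have hstrict : ∀ p ∈ S, ‖p.2 - c‖ < p.1 - v := by
      intro p hp
      rcases lt_or_eq_of_le (hfeas p hp) with h' | h'
      · exact h'
      · exfalso
        have : p ∈ A := Finset.mem_filter.mpr ⟨hp, h'.symm⟩
        rw [hAe] at this; exact absurd this (Finset.notMem_empty p)
    set ε := S.inf' h.1 (fun p => p.1 - v - ‖p.2 - c‖) with hε
    have hεpos : 0 < ε := by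
      rw [hε, Finset.lt_inf'_iff]
      intro p hp; have := hstrict p hp; linarith
    have hyfeas : QFeasible S (v + ε, c) := by
      intro q hq
      have := Finset.inf'_le (fun p => p.1 - v - ‖p.2 - c‖) hq
      show ‖q.2 - c‖ ≤ q.1 - (v + ε)
      rw [hε] at *
      linarith [this]
    have := hxopt.2 _ hyfeas
    simp only at this
    linarith
  by_cases hcase : ∃ q ∈ A, q.2 = c
  · -- a point coincides with the optimum center : singleton support
    obtain ⟨q, hqA, hqc⟩ := hcase
    obtain ⟨hqS, hqact⟩ := hAmem q hqA
    have hq1 : q.1 = v := by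
      rw [hqc] at hqact; simp at hqact; linarith
    have hsub : ({q} : Finset _) ⊆ S := Finset.singleton_subset_iff.mpr hqS
    have hne : ({q} : Finset _) ≠ S := by
      intro he
      rw [← he] at hcard
      simp at hcard
    have hss : ({q} : Finset _) ⊂ S := lt_of_le_of_ne hsub hne
    have hqopt : QOptimal {q} x := by
      constructor
      · intro r hr
        rw [Finset.mem_singleton] at hr
        subst hr
        rw [hqc]
        simp [hq1, hc, hv]
      · intro y hy
        have := hy q (Finset.mem_singleton_self q)
        have h0 := norm_nonneg (q.2 - y.2)
        show y.1 ≤ v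
        linarith [hq1 ▸ this]
    exact absurd rfl (h.2 _ hss ⟨q, Finset.mem_singleton_self q⟩ x x hxopt hqopt)
  · -- all active points are distinct from the center
    push_neg at hcase
    have hnorm_pos : ∀ p ∈ A, 0 < ‖p.2 - c‖ := by
      intro p hp
      rw [norm_pos_iff, sub_ne_zero]
      exact hcase p hp
    set u : (ℝ × EuclideanSpace ℝ (Fin d)) → EuclideanSpace ℝ (Fin d) :=
      fun p => ‖p.2 - c‖⁻¹ • (p.2 - c) with hu
    have hunorm : ∀ p ∈ A, ‖u p‖ = 1 := by
      intro p hp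
      rw [hu]
      simp only [norm_smul, norm_inv, norm_norm]
      field_simp [ne_of_gt (hnorm_pos p hp)]
    have huinner : ∀ p ∈ A, ⟪u p, p.2 - c⟫ = ‖p.2 - c‖ := by
      intro p hp
      rw [hu]
      simp only [real_inner_smul_left, real_inner_self_eq_norm_sq]
      field_simp [ne_of_gt (hnorm_pos p hp)]
    -- Claim 1 : 0 is in the convex hull of the active directions
    have hclaim1 : (0 : EuclideanSpace ℝ (Fin d)) ∈ convexHull ℝ (u '' ↑A) := by
      by_contra hsep
      have hKcl : IsClosed (convexHull ℝ (u '' (↑A : Set _))) :=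
        ((A.finite_toSet.image u).isCompact_convexHull (𝕜 := ℝ)).isClosed
      obtain ⟨f, s, hfs, hs0⟩ :=
        geometric_hahn_banach_closed_point (convex_convexHull ℝ _) hKcl hsep
      rw [map_zero] at hs0
      set w : EuclideanSpace ℝ (Fin d) :=
        -((InnerProductSpace.toDual ℝ _).symm f) with hw
      have hwu : ∀ p ∈ A, 0 < ⟪w, u p⟫ := by
        intro p hp
        have h1 : f (u p) < s := hfs _ (subset_convexHull ℝ _ ⟨p, hp, rfl⟩)
        rw [hw, inner_neg_left]
        have h2 : ⟪((InnerProductSpace.toDual ℝ _).symm f), u p⟫ = f (u p) :=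
          InnerProductSpace.toDual_symm_apply
        rw [h2]; linarith
      have hwpc : ∀ p ∈ A, 0 < ⟪w, p.2 - c⟫ := by
        intro p hp
        have h1 := hwu p hp
        rw [hu] at h1
        simp only [real_inner_smul_right] at h1
        have h2 := hnorm_pos p hp
        nlinarith [inv_pos.mpr h2]
      have hwne : w ≠ 0 := by
        obtain ⟨p, hp⟩ := hAne
        intro hw0
        have := hwpc p hp
        rw [hw0, inner_zero_left] at this
        exact lt_irrefl 0 this
      have hwn : 0 < ‖w‖ := norm_pos_iff.mpr hwne
      set b : (ℝ × EuclideanSpace ℝ (Fin d)) → ℝ := fun p =>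
        if p.1 - v = ‖p.2 - c‖ then ⟪w, p.2 - c⟫ / ‖w‖ ^ 2
        else (p.1 - v - ‖p.2 - c‖) / ‖w‖ with hb
      have hbpos : ∀ p ∈ S, 0 < b p := by
        intro p hp
        rw [hb]
        by_cases hact : p.1 - v = ‖p.2 - c‖
        · simp only [hact, if_pos]
          have : p ∈ A := Finset.mem_filter.mpr ⟨hp, hact⟩
          exact div_pos (hwpc p this) (by positivity)
        · simp only [hact, if_neg, if_false]
          have hle := hfeas p hp
          have : ‖p.2 - c‖ < p.1 - v := lt_of_le_of_ne hle (fun he => hact he.symm)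
          exact div_pos (by linarith) hwn
      set t := S.inf' h.1 b / 2 with ht
      have hinfpos : 0 < S.inf' h.1 b := by
        rw [Finset.lt_inf'_iff]; exact hbpos
      have htpos : 0 < t := by rw [ht]; linarith
      have htlt : ∀ p ∈ S, t < b p := by
        intro p hp
        have := Finset.inf'_le b hp
        rw [ht]; linarith
      have hkey : ∀ p ∈ S, ‖p.2 - (c + t • w)‖ < p.1 - v := by
        intro p hp
        have hrw : p.2 - (c + t • w) = (p.2 - c) - t • w := by abel
        by_cases hact : p.1 - v = ‖p.2 - c‖
        · have hpA : p ∈ A := Finset.mem_filter.mpr ⟨hp, hact⟩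
          have hnp := hnorm_pos p hpA
          have hblt := htlt p hp
          rw [hb] at hblt
          simp only [hact, if_pos] at hblt
          have h1 : t * ‖w‖ ^ 2 < ⟪w, p.2 - c⟫ := by
            rw [lt_div_iff₀ (by positivity)] at hblt
            linarith [hblt]
          have hexp : ‖(p.2 - c) - t • w‖ ^ 2
              = ‖p.2 - c‖ ^ 2 - 2 * (t * ⟪w, p.2 - c⟫) + t ^ 2 * ‖w‖ ^ 2 := by
            rw [norm_sub_sq_real, real_inner_smul_right, norm_smul]
            rw [real_inner_comm]
            rw [Real.norm_eq_abs, abs_of_pos htpos]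
            ring
          have h2 : ‖(p.2 - c) - t • w‖ ^ 2 < (p.1 - v) ^ 2 := by
            rw [hexp, hact]
            nlinarith
          rw [hrw]
          have h3 : (0:ℝ) ≤ p.1 - v := by rw [hact]; positivity
          exact lt_of_pow_lt_pow_left₀ 2 h3 h2
        · have hblt := htlt p hp
          rw [hb] at hblt
          simp only [hact, if_neg, if_false] at hblt
          have h1 : t * ‖w‖ < p.1 - v - ‖p.2 - c‖ := by
            rw [lt_div_iff₀ hwn] at hblt
            linarith
          have h2 : ‖(p.2 - c) - t • w‖ ≤ ‖p.2 - c‖ + ‖t • w‖ := norm_sub_le _ _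
          rw [hrw]
          have h3 : ‖t • w‖ = t * ‖w‖ := by
            rw [norm_smul, Real.norm_eq_abs, abs_of_pos htpos]
          linarith
      set ε := S.inf' h.1 (fun p => p.1 - v - ‖p.2 - (c + t • w)‖) with hε
      have hεpos : 0 < ε := by
        rw [hε, Finset.lt_inf'_iff]
        intro p hp; have := hkey p hp; linarith
      have hyfeas : QFeasible S (v + ε, c + t • w) := by
        intro q hq
        have := Finset.inf'_le (fun p => p.1 - v - ‖p.2 - (c + t • w)‖) hq
        show ‖q.2 - (c + t • w)‖ ≤ q.1 - (v + ε)
        rw [hε] at *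
        linarith [this]
      have := hxopt.2 _ hyfeas
      simp only at this
      linarith
    -- Carathéodory
    rw [convexHull_eq_union] at hclaim1
    simp only [Set.mem_iUnion] at hclaim1
    obtain ⟨T, hTsub, hTai, h0T⟩ := hclaim1
    have hTcard : T.card ≤ d + 1 := by
      have h1 := hTai.card_le_finrank_succ
      rw [Fintype.card_coe] at h1
      have h2 : Module.finrank ℝ
          (vectorSpan ℝ (Set.range ((↑) : T → EuclideanSpace ℝ (Fin d))))
          ≤ Module.finrank ℝ (EuclideanSpace ℝ (Fin d)) := Submodule.finrank_le _
      rw [finrank_euclideanSpace_fin] at h2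
      omega
    have hTne : T.Nonempty := by
      rcases T.eq_empty_or_nonempty with he | hne
      · rw [he] at h0T; simp at h0T
      · exact hne
    -- choose preimages
    have hex : ∀ t' ∈ T, ∃ p, p ∈ A ∧ u p = t' := by
      intro t' ht'
      obtain ⟨p, hp, hup⟩ := hTsub ht'
      exact ⟨p, hp, hup⟩
    set g : {t' // t' ∈ T} → (ℝ × EuclideanSpace ℝ (Fin d)) :=
      fun t' => (hex t'.1 t'.2).choose with hg
    have hgA : ∀ t', g t' ∈ A := fun t' => (hex t'.1 t'.2).choose_spec.1
    have hgu : ∀ t', u (g t') = t'.1 := fun t' => (hex t'.1 t'.2).choose_spec.2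
    set A' := T.attach.image g with hA'
    have hA'A : A' ⊆ A := by
      intro p hp
      rw [hA', Finset.mem_image] at hp
      obtain ⟨t', _, rfl⟩ := hp
      exact hgA t'
    have hA'S : A' ⊆ S := hA'A.trans hAS
    have hA'ne : A'.Nonempty := by
      obtain ⟨t', ht'⟩ := hTne
      exact ⟨g ⟨t', ht'⟩, Finset.mem_image.mpr ⟨⟨t', ht'⟩, Finset.mem_attach _ _, rfl⟩⟩
    have hA'card : A'.card ≤ d + 1 := by
      calc A'.card ≤ T.attach.card := Finset.card_image_le
        _ = T.card := Finset.card_attach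
        _ ≤ d + 1 := hTcard
    have hA'ss : A' ⊂ S := by
      refine lt_of_le_of_ne hA'S ?_
      intro he
      rw [he] at hA'card
      omega
    -- key inequality for feasible points of A'
    have hkeyineq : ∀ y, QFeasible A' y → ∀ t' ∈ T, y.1 ≤ v + ⟪t', y.2 - c⟫ := by
      intro y hy t' ht'
      set p := g ⟨t', ht'⟩ with hp
      have hpA' : p ∈ A' := Finset.mem_image.mpr ⟨⟨t', ht'⟩, Finset.mem_attach _ _, rfl⟩
      have hpA : p ∈ A := hA'A hpA'
      obtain ⟨hpS, hpact⟩ := hAmem p hpA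
      have hupt : u p = t' := hgu ⟨t', ht'⟩
      have hfy : ‖p.2 - y.2‖ ≤ p.1 - y.1 := hy p hpA'
      have hCS : ⟪u p, p.2 - y.2⟫ ≤ ‖p.2 - y.2‖ := by
        have := real_inner_le_norm (u p) (p.2 - y.2)
        rw [hunorm p hpA] at this
        linarith [this]
      have hsplit : ⟪u p, p.2 - y.2⟫ = ⟪u p, p.2 - c⟫ - ⟪u p, y.2 - c⟫ := by
        rw [← inner_sub_right]
        congr 1
        abel
      have h1 := huinner p hpA
      rw [← hupt]
      have : ⟪u p, p.2 - c⟫ - ⟪u p, y.2 - c⟫ ≤ ‖p.2 - y.2‖ := by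
        rw [← hsplit]; exact hCS
      rw [h1] at this
      linarith
    -- x is optimal for A'
    have hoptA' : QOptimal A' x := by
      constructor
      · intro q hq; exact hfeas q (hA'S hq)
      · intro y hy
        -- convex combination representation
        rw [Finset.convexHull_eq] at h0T
        obtain ⟨wgt, hwgt0, hwgt1, hcm⟩ := h0T
        have hcm' : ∑ t' ∈ T, wgt t' • id t' = 0 := by
          rw [← Finset.centerMass_eq_of_sum_1 _ id hwgt1]
          exact hcm
        simp only [id_eq] at hcm'
        have step : ∀ t' ∈ T, wgt t' * y.1 ≤ wgt t' * (v + ⟪t', y.2 - c⟫) :=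
          fun t' ht' => mul_le_mul_of_nonneg_left (hkeyineq y hy t' ht') (hwgt0 t' ht')
        have hsum := Finset.sum_le_sum step
        rw [← Finset.sum_mul, hwgt1, one_mul] at hsum
        have hrhs : ∑ t' ∈ T, wgt t' * (v + ⟪t', y.2 - c⟫)
            = v + ⟪∑ t' ∈ T, wgt t' • t', y.2 - c⟫ := by
          rw [sum_inner]
          simp_rw [mul_add]
          rw [Finset.sum_add_distrib, ← Finset.sum_mul, hwgt1, one_mul]
          congr 1
          refine Finset.sum_congr rfl fun t' _ => ?_
          rw [real_inner_smul_left]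
        rw [hrhs, hcm', inner_zero_left, add_zero] at hsum
        exact hsum
    exact absurd rfl (h.2 A' hA'ss hA'ne x x hxopt hoptA')

end SupportSetAux

/-- Every support set has at least `1` and at most `d + 1` elements. -/

theorem stmt_12 (d m : ℕ) (hd : 1 ≤ d) (hm : 1 ≤ m)
    (p : Fin m → ℝ × EuclideanSpace ℝ (Fin d))
    (S : Finset (ℝ × EuclideanSpace ℝ (Fin d)))
    (hS : (S : Set (ℝ × EuclideanSpace ℝ (Fin d))) ⊆ Set.range p)
    (h : SupportSet S) :
    1 ≤ S.card ∧ S.card ≤ d + 1 := by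
  exact card_le_of_supportSet hd S h
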